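/- Let F be a field, B₀ ∈ M_n(F) an invertible matrix, and X ∈ M_n(F) an invertible matrix with X·B₀·Xᵀ = B₀. Let ℒ = {B ∈ M_n(F) : X·B·Xᵀ = B and B = T·B₀·Tᵀ for some invertible T}, with the equivalence relation B ∼ B′ iff B′ = Y·B·Yᵀ for some invertible Y satisfying Y·X = X·Y. Let 𝒦 = {Z ∈ M_n(F) : Z·B₀·Zᵀ = B₀ and Z = P⁻¹·X·P for some invertible P}, with the equivalence relation Z ∼ Z′ iff Z′ = g⁻¹·Z·g for some invertible g with g·B₀·gᵀ = B₀. Then the set of equivalence classes of ℒ and the set of equivalence classes of 𝒦 have the same cardinality. -/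

import Mathlib

open Matrix

set_option maxHeartbeats 1600000 in
/-- Let `X` be an isometry of the form with invertible Gram matrix `B₀`.  The set of forms
congruent to `B₀` and preserved by `X`, modulo congruence by elements of the centralizer of
`X` in `GL(n,F)`, has the same cardinality as the set of `GL(n,F)`-conjugates of `X` lying
in the isometry group of `B₀`, modulo conjugacy by isometries of `B₀`. -/
theorem card_form_orbits_eq_card_class_orbits
    {F : Type*} [Field F] {n : ℕ}
    (B₀ X : Matrix (Fin n) (Fin n) F) (hB₀ : IsUnit B₀) (hX : IsUnit X)
    (hXB₀ : X * B₀ * Xᵀ = B₀) :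
    Nonempty (
      Quot (fun (B B' : {B : Matrix (Fin n) (Fin n) F //
              X * B * Xᵀ = B ∧ ∃ T, IsUnit T ∧ B = T * B₀ * Tᵀ}) =>
          ∃ Y, IsUnit Y ∧ Y * X = X * Y ∧
            (B' : Matrix (Fin n) (Fin n) F) = Y * (B : Matrix (Fin n) (Fin n) F) * Yᵀ)
      ≃
      Quot (fun (Z Z' : {Z : Matrix (Fin n) (Fin n) F //
              Z * B₀ * Zᵀ = B₀ ∧ ∃ P, IsUnit P ∧ Z = P⁻¹ * X * P}) =>
          ∃ g, IsUnit g ∧ g * B₀ * gᵀ = B₀ ∧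
            (Z' : Matrix (Fin n) (Fin n) F) = g⁻¹ * (Z : Matrix (Fin n) (Fin n) F) * g)) := by
  classical
  let SL := {B : Matrix (Fin n) (Fin n) F //
      X * B * Xᵀ = B ∧ ∃ T, IsUnit T ∧ B = T * B₀ * Tᵀ}
  let SK := {Z : Matrix (Fin n) (Fin n) F //
      Z * B₀ * Zᵀ = B₀ ∧ ∃ P, IsUnit P ∧ Z = P⁻¹ * X * P}
  let rL : SL → SL → Prop := fun B B' =>
    ∃ Y, IsUnit Y ∧ Y * X = X * Y ∧
      (B' : Matrix (Fin n) (Fin n) F) = Y * (B : Matrix (Fin n) (Fin n) F) * Yᵀ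
  let rK : SK → SK → Prop := fun Z Z' =>
    ∃ g, IsUnit g ∧ g * B₀ * gᵀ = B₀ ∧
      (Z' : Matrix (Fin n) (Fin n) F) = g⁻¹ * (Z : Matrix (Fin n) (Fin n) F) * g
  -- forward map on representatives
  let fwd : SL → SK := fun B =>
    ⟨(B.2.2.choose)⁻¹ * X * B.2.2.choose, by
      obtain ⟨hT, hBT⟩ := B.2.2.choose_spec
      set T := B.2.2.choose with hTdef
      have hB := B.2.1
      haveI : Invertible T := hT.invertible
      haveI : Invertible Tᵀ := (Matrix.transposeInvertibleEquivInvertible T).symm ‹Invertible T›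
      constructor
      · have h := congrArg (fun M => T⁻¹ * M * Tᵀ⁻¹) hB
        rw [hBT] at h
        simpa [mul_assoc, Matrix.transpose_mul, Matrix.transpose_nonsing_inv,
          Matrix.mul_inv_rev, Matrix.inv_mul_cancel_left_of_invertible,
          Matrix.mul_inv_cancel_left_of_invertible, Matrix.inv_mul_cancel_right_of_invertible,
          Matrix.mul_inv_cancel_right_of_invertible, Matrix.inv_inv_of_invertible,
          Matrix.inv_mul_of_invertible, Matrix.mul_inv_of_invertible] using h
      · exact ⟨T, hT, rfl⟩⟩
  -- backward map on representatives
  let bwd : SK → SL := fun Z =>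
    ⟨Z.2.2.choose * B₀ * (Z.2.2.choose)ᵀ, by
      obtain ⟨hP, hZP⟩ := Z.2.2.choose_spec
      set P := Z.2.2.choose with hPdef
      have hZ := Z.2.1
      haveI : Invertible P := hP.invertible
      haveI : Invertible Pᵀ := (Matrix.transposeInvertibleEquivInvertible P).symm ‹Invertible P›
      constructor
      · have h := congrArg (fun M => P * M * Pᵀ) hZ
        rw [hZP] at h
        simpa [mul_assoc, Matrix.transpose_mul, Matrix.transpose_nonsing_inv,
          Matrix.mul_inv_rev, Matrix.inv_mul_cancel_left_of_invertible,
          Matrix.mul_inv_cancel_left_of_invertible, Matrix.inv_mul_cancel_right_of_invertible,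
          Matrix.mul_inv_cancel_right_of_invertible, Matrix.inv_inv_of_invertible,
          Matrix.inv_mul_of_invertible, Matrix.mul_inv_of_invertible] using h
      · exact ⟨P, hP, rfl⟩⟩
  -- forward map is well defined on the quotient
  have fwdWD : ∀ B B' : SL, rL B B' → Quot.mk rK (fwd B) = Quot.mk rK (fwd B') := by
    intro B B' hrel
    obtain ⟨Y, hY, hYX, hYB⟩ := hrel
    apply Quot.sound
    obtain ⟨hT, hBT⟩ := B.2.2.choose_spec
    obtain ⟨hT', hB'T'⟩ := B'.2.2.choose_spec
    haveI : Invertible B.2.2.choose := hT.invertible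
    haveI : Invertible B.2.2.chooseᵀ :=
      (Matrix.transposeInvertibleEquivInvertible _).symm ‹_›
    haveI : Invertible B'.2.2.choose := hT'.invertible
    haveI : Invertible B'.2.2.chooseᵀ :=
      (Matrix.transposeInvertibleEquivInvertible _).symm ‹_›
    haveI : Invertible Y := hY.invertible
    haveI : Invertible Yᵀ := (Matrix.transposeInvertibleEquivInvertible Y).symm ‹Invertible Y›
    set T := B.2.2.choose with hTdef
    set T' := B'.2.2.choose with hT'def
    refine ⟨T⁻¹ * Y⁻¹ * T', ?_, ?_, ?_⟩
    · exact ((Matrix.isUnit_nonsing_inv_iff.2 hT).mul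
        (Matrix.isUnit_nonsing_inv_iff.2 hY)).mul hT'
    · -- (T⁻¹ Y⁻¹ T') B₀ (T⁻¹ Y⁻¹ T')ᵀ = B₀
      have key : T' * B₀ * T'ᵀ = Y * (T * B₀ * Tᵀ) * Yᵀ := by
        rw [← hB'T', ← hBT, hYB]
      have h := congrArg (fun M => (T⁻¹ * Y⁻¹) * M * (Yᵀ⁻¹ * Tᵀ⁻¹)) key
      simpa [mul_assoc, Matrix.transpose_mul, Matrix.transpose_nonsing_inv,
        Matrix.mul_inv_rev, Matrix.inv_mul_cancel_left_of_invertible,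
        Matrix.mul_inv_cancel_left_of_invertible, Matrix.inv_mul_cancel_right_of_invertible,
        Matrix.mul_inv_cancel_right_of_invertible, Matrix.inv_inv_of_invertible,
        Matrix.inv_mul_of_invertible, Matrix.mul_inv_of_invertible] using h
    · -- T'⁻¹ X T' = (T⁻¹ Y⁻¹ T')⁻¹ (T⁻¹ X T) (T⁻¹ Y⁻¹ T')
      show T'⁻¹ * X * T' = (T⁻¹ * Y⁻¹ * T')⁻¹ * (T⁻¹ * X * T) * (T⁻¹ * Y⁻¹ * T')
      have h := congrArg (fun M => T'⁻¹ * M * (Y⁻¹ * T')) hYX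
      simpa [mul_assoc, Matrix.mul_inv_rev, Matrix.inv_inv_of_invertible,
        Matrix.inv_mul_cancel_left_of_invertible, Matrix.mul_inv_cancel_left_of_invertible,
        Matrix.inv_mul_cancel_right_of_invertible,
        Matrix.mul_inv_cancel_right_of_invertible] using h.symm
  -- backward map is well defined on the quotient
  have bwdWD : ∀ Z Z' : SK, rK Z Z' → Quot.mk rL (bwd Z) = Quot.mk rL (bwd Z') := by
    intro Z Z' hrel
    obtain ⟨g, hg, hgB, hgZ⟩ := hrel
    apply Quot.sound
    obtain ⟨hP, hZP⟩ := Z.2.2.choose_spec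
    obtain ⟨hP', hZ'P'⟩ := Z'.2.2.choose_spec
    haveI : Invertible Z.2.2.choose := hP.invertible
    haveI : Invertible Z.2.2.chooseᵀ :=
      (Matrix.transposeInvertibleEquivInvertible _).symm ‹_›
    haveI : Invertible Z'.2.2.choose := hP'.invertible
    haveI : Invertible Z'.2.2.chooseᵀ :=
      (Matrix.transposeInvertibleEquivInvertible _).symm ‹_›
    haveI : Invertible g := hg.invertible
    haveI : Invertible gᵀ := (Matrix.transposeInvertibleEquivInvertible g).symm ‹Invertible g›
    set P := Z.2.2.choose with hPdef
    set P' := Z'.2.2.choose with hP'def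
    refine ⟨P' * g⁻¹ * P⁻¹, ?_, ?_, ?_⟩
    · exact (hP'.mul (Matrix.isUnit_nonsing_inv_iff.2 hg)).mul
        (Matrix.isUnit_nonsing_inv_iff.2 hP)
    · -- (P' g⁻¹ P⁻¹) X = X (P' g⁻¹ P⁻¹)
      have hPZ : P * (Z : Matrix (Fin n) (Fin n) F) = X * P := by
        have h := congrArg (fun M => P * M) hZP
        simpa [mul_assoc, Matrix.mul_inv_cancel_left_of_invertible] using h
      have hP'Z' : P' * (Z' : Matrix (Fin n) (Fin n) F) = X * P' := by
        have h := congrArg (fun M => P' * M) hZ'P'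
        simpa [mul_assoc, Matrix.mul_inv_cancel_left_of_invertible] using h
      have hgZ' : g⁻¹ * (Z : Matrix (Fin n) (Fin n) F)
          = (Z' : Matrix (Fin n) (Fin n) F) * g⁻¹ := by
        have h := congrArg (fun M => M * g⁻¹) hgZ
        simpa [mul_assoc, Matrix.mul_inv_cancel_right_of_invertible,
          Matrix.inv_mul_cancel_right_of_invertible, Matrix.mul_inv_of_invertible,
          Matrix.inv_mul_of_invertible, mul_one] using h.symm
      have hPX : P⁻¹ * X = (Z : Matrix (Fin n) (Fin n) F) * P⁻¹ := by
        have h := congrArg (fun M => P⁻¹ * M * P⁻¹) hPZ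
        simpa [mul_assoc, Matrix.inv_mul_cancel_left_of_invertible,
          Matrix.mul_inv_cancel_right_of_invertible, Matrix.mul_inv_of_invertible,
          Matrix.inv_mul_of_invertible, mul_one] using h.symm
      calc P' * g⁻¹ * P⁻¹ * X = P' * g⁻¹ * ((Z : Matrix (Fin n) (Fin n) F) * P⁻¹) := by
            rw [mul_assoc (P' * g⁻¹), hPX]
        _ = P' * ((Z' : Matrix (Fin n) (Fin n) F) * g⁻¹) * P⁻¹ := by
            simp only [← mul_assoc]
            rw [mul_assoc P' g⁻¹, hgZ', ← mul_assoc]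
        _ = X * (P' * g⁻¹ * P⁻¹) := by
            simp only [← mul_assoc]
            rw [hP'Z']
    · -- P' B₀ P'ᵀ = Y (P B₀ Pᵀ) Yᵀ
      have hginv : g⁻¹ * B₀ * gᵀ⁻¹ = B₀ := by
        have h := congrArg (fun M => g⁻¹ * M * gᵀ⁻¹) hgB
        simpa [mul_assoc, Matrix.inv_mul_cancel_left_of_invertible,
          Matrix.mul_inv_cancel_right_of_invertible, Matrix.mul_inv_of_invertible,
          Matrix.inv_mul_of_invertible, mul_one] using h.symm
      show P' * B₀ * P'ᵀ = (P' * g⁻¹ * P⁻¹) * (P * B₀ * Pᵀ) * (P' * g⁻¹ * P⁻¹)ᵀ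
      calc P' * B₀ * P'ᵀ = P' * (g⁻¹ * B₀ * gᵀ⁻¹) * P'ᵀ := by rw [hginv]
        _ = (P' * g⁻¹ * P⁻¹) * (P * B₀ * Pᵀ) * (P' * g⁻¹ * P⁻¹)ᵀ := by
            rw [Matrix.transpose_mul, Matrix.transpose_mul, Matrix.transpose_nonsing_inv,
              Matrix.transpose_nonsing_inv]
            simp only [mul_assoc, Matrix.inv_mul_cancel_left_of_invertible,
              Matrix.mul_inv_cancel_left_of_invertible]
  -- the two maps are mutually inverse on the quotients
  refine ⟨⟨Quot.lift (fun B => Quot.mk rK (fwd B)) fwdWD,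
           Quot.lift (fun Z => Quot.mk rL (bwd Z)) bwdWD, ?_, ?_⟩⟩
  · refine Quot.ind (fun B => ?_)
    show Quot.mk rL (bwd (fwd B)) = Quot.mk rL B
    apply Quot.sound
    obtain ⟨hT, hBT⟩ := B.2.2.choose_spec
    obtain ⟨hP, hZP⟩ := (fwd B).2.2.choose_spec
    haveI : Invertible B.2.2.choose := hT.invertible
    haveI : Invertible B.2.2.chooseᵀ :=
      (Matrix.transposeInvertibleEquivInvertible _).symm ‹_›
    haveI : Invertible (fwd B).2.2.choose := hP.invertible
    haveI : Invertible (fwd B).2.2.chooseᵀ :=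
      (Matrix.transposeInvertibleEquivInvertible _).symm ‹_›
    set T := B.2.2.choose with hTdef
    set P := (fwd B).2.2.choose with hPdef
    have hZ1 : ((fwd B : SK) : Matrix (Fin n) (Fin n) F) = T⁻¹ * X * T := rfl
    rw [hZ1] at hZP
    refine ⟨T * P⁻¹, hT.mul (Matrix.isUnit_nonsing_inv_iff.2 hP), ?_, ?_⟩
    · -- (T P⁻¹) X = X (T P⁻¹)
      have h2 : X * P = P * (T⁻¹ * X * T) := by
        have h3 := congrArg (fun M => P * M) hZP
        simpa [mul_assoc, Matrix.mul_inv_cancel_left_of_invertible] using h3.symm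
      have hPX : P⁻¹ * X = (T⁻¹ * X * T) * P⁻¹ := by
        have h4 := congrArg (fun M => P⁻¹ * M * P⁻¹) h2
        simpa [mul_assoc, Matrix.inv_mul_cancel_left_of_invertible,
          Matrix.mul_inv_cancel_right_of_invertible, Matrix.mul_inv_of_invertible,
          Matrix.inv_mul_of_invertible, mul_one] using h4
      calc T * P⁻¹ * X = T * ((T⁻¹ * X * T) * P⁻¹) := by rw [mul_assoc, hPX]
        _ = X * (T * P⁻¹) := by
            simp [mul_assoc, Matrix.mul_inv_cancel_left_of_invertible]
    · -- B = (T P⁻¹) (P B₀ Pᵀ) (T P⁻¹)ᵀ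
      show (B : Matrix (Fin n) (Fin n) F)
          = (T * P⁻¹) * (P * B₀ * Pᵀ) * (T * P⁻¹)ᵀ
      rw [hBT]
      simp [mul_assoc, Matrix.transpose_mul, Matrix.transpose_nonsing_inv,
        Matrix.mul_inv_rev, Matrix.inv_mul_cancel_left_of_invertible,
        Matrix.mul_inv_cancel_left_of_invertible, Matrix.inv_mul_cancel_right_of_invertible,
        Matrix.mul_inv_cancel_right_of_invertible]
  · refine Quot.ind (fun Z => ?_)
    show Quot.mk rK (fwd (bwd Z)) = Quot.mk rK Z
    apply Quot.sound
    obtain ⟨hP, hZP⟩ := Z.2.2.choose_spec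
    obtain ⟨hT, hBT⟩ := (bwd Z).2.2.choose_spec
    haveI : Invertible Z.2.2.choose := hP.invertible
    haveI : Invertible Z.2.2.chooseᵀ :=
      (Matrix.transposeInvertibleEquivInvertible _).symm ‹_›
    haveI : Invertible (bwd Z).2.2.choose := hT.invertible
    haveI : Invertible (bwd Z).2.2.chooseᵀ :=
      (Matrix.transposeInvertibleEquivInvertible _).symm ‹_›
    set P := Z.2.2.choose with hPdef
    set T := (bwd Z).2.2.choose with hTdef
    have hB1 : ((bwd Z : SL) : Matrix (Fin n) (Fin n) F) = P * B₀ * Pᵀ := rfl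
    rw [hB1] at hBT
    refine ⟨T⁻¹ * P, (Matrix.isUnit_nonsing_inv_iff.2 hT).mul hP, ?_, ?_⟩
    · -- (T⁻¹ P) B₀ (T⁻¹ P)ᵀ = B₀
      have h := congrArg (fun M => T⁻¹ * M * Tᵀ⁻¹) hBT
      simpa [mul_assoc, Matrix.transpose_mul, Matrix.transpose_nonsing_inv,
        Matrix.mul_inv_rev, Matrix.inv_mul_cancel_left_of_invertible,
        Matrix.mul_inv_cancel_left_of_invertible, Matrix.inv_mul_cancel_right_of_invertible,
        Matrix.mul_inv_cancel_right_of_invertible] using h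
    · -- Z = (T⁻¹ P)⁻¹ (T⁻¹ X T) (T⁻¹ P)
      show (Z : Matrix (Fin n) (Fin n) F)
          = (T⁻¹ * P)⁻¹ * (T⁻¹ * X * T) * (T⁻¹ * P)
      rw [hZP]
      simp [mul_assoc, Matrix.mul_inv_rev, Matrix.inv_inv_of_invertible,
        Matrix.inv_mul_cancel_left_of_invertible, Matrix.mul_inv_cancel_left_of_invertible,
        Matrix.inv_mul_cancel_right_of_invertible, Matrix.mul_inv_cancel_right_of_invertible]
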